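/- Positive definiteness under observability: suppose Q = C'C and the pair (A,C) is observable, meaning that C x = 0, CAx = 0, ..., CA^{n-1}x = 0 imply x = 0. Then there exists N_0 such that for all N > N_0, the finite-horizon Riccati matrix P_0(N) (with terminal condition 0) is positive definite. Equivalently: if x'P_0(N)x = 0 for N ≥ n−1, then x = 0. -/

import Mathlib

open Matrix

lemma quad_conj' {a b : ℕ} (M : Matrix (Fin a) (Fin b) ℝ) (P : Matrix (Fin a) (Fin a) ℝ)
    (x : Fin b → ℝ) :
    x ⬝ᵥ ((Mᵀ * (P * M)) *ᵥ x) = (M *ᵥ x) ⬝ᵥ (P *ᵥ (M *ᵥ x)) := by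
  rw [← mulVec_mulVec, dotProduct_mulVec, vecMul_transpose, ← mulVec_mulVec]

lemma quad_CtC {a b : ℕ} (M : Matrix (Fin a) (Fin b) ℝ) (x : Fin b → ℝ) :
    x ⬝ᵥ ((Mᵀ * M) *ᵥ x) = (M *ᵥ x) ⬝ᵥ (M *ᵥ x) := by
  rw [← mulVec_mulVec, dotProduct_mulVec, vecMul_transpose]

lemma psd_quad {q : ℕ} {M : Matrix (Fin q) (Fin q) ℝ} (h : M.PosSemidef) (x : Fin q → ℝ) :
    0 ≤ x ⬝ᵥ (M *ᵥ x) := by simpa using h.dotProduct_mulVec_nonneg x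

lemma pd_quad {q : ℕ} {M : Matrix (Fin q) (Fin q) ℝ} (h : M.PosDef) {x : Fin q → ℝ}
    (hx : x ≠ 0) : 0 < x ⬝ᵥ (M *ᵥ x) := by simpa using h.dotProduct_mulVec_pos hx

lemma joseph {n m : ℕ} (A : Matrix (Fin n) (Fin n) ℝ) (B : Matrix (Fin n) (Fin m) ℝ)
    (P1 : Matrix (Fin n) (Fin n) ℝ) (R : Matrix (Fin m) (Fin m) ℝ)
    (hP1 : P1.PosSemidef) (hR : R.PosDef) :
    Aᵀ * P1 * A - Aᵀ * P1 * B * (R + Bᵀ * P1 * B)⁻¹ * Bᵀ * P1 * A =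
    ((R + Bᵀ * P1 * B)⁻¹ * (Bᵀ * (P1 * A)))ᵀ * (R * ((R + Bᵀ * P1 * B)⁻¹ * (Bᵀ * (P1 * A))))
    + (A - B * ((R + Bᵀ * P1 * B)⁻¹ * (Bᵀ * (P1 * A))))ᵀ *
      (P1 * (A - B * ((R + Bᵀ * P1 * B)⁻¹ * (Bᵀ * (P1 * A))))) := by
  have hBPB : (Bᵀ * P1 * B).PosSemidef := by
    have := hP1.conjTranspose_mul_mul_same B
    simpa using this
  have hG : (R + Bᵀ * P1 * B).PosDef := hR.add_posSemidef hBPB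
  have hP1sym : P1ᵀ = P1 := by simpa using hP1.isHermitian.eq
  simp only [Matrix.mul_assoc] at *
  set G := R + Bᵀ * (P1 * B) with hGdef
  set K := G⁻¹ * (Bᵀ * (P1 * A)) with hKdef
  have hGsym : Gᵀ = G := by simpa using hG.isHermitian.eq
  have hdet : IsUnit G.det := (Matrix.isUnit_iff_isUnit_det _).1 hG.isUnit
  have hGinv : G * G⁻¹ = 1 := mul_nonsing_inv G hdet
  have hGK : G * K = Bᵀ * (P1 * A) := by
    rw [hKdef, ← Matrix.mul_assoc, hGinv, Matrix.one_mul]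
  have h2 : Kᵀ * (Bᵀ * (P1 * A)) = Kᵀ * (G * K) := by rw [hGK]
  have hSsym : (Kᵀ * (G * K))ᵀ = Kᵀ * (G * K) := by
    simp [Matrix.transpose_mul, hGsym, Matrix.mul_assoc]
  have h1 : Aᵀ * (P1 * (B * K)) = Kᵀ * (G * K) := by
    have : (Kᵀ * (Bᵀ * (P1 * A)))ᵀ = Aᵀ * (P1 * (B * K)) := by
      simp [Matrix.transpose_mul, hP1sym, Matrix.mul_assoc]
    rw [← this, h2, hSsym]
  have h3 : Kᵀ * (Bᵀ * (P1 * (B * K))) = Kᵀ * (G * K) - Kᵀ * (R * K) := by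
    have hexp : G * K = R * K + Bᵀ * (P1 * (B * K)) := by
      rw [hGdef, Matrix.add_mul, Matrix.mul_assoc, Matrix.mul_assoc]
    rw [hexp, Matrix.mul_add]
    abel
  simp only [Matrix.transpose_sub, Matrix.transpose_mul, Matrix.sub_mul, Matrix.mul_sub,
    Matrix.mul_assoc]
  rw [h1, h2, h3]
  abel


/-- Under observability of `(A, C)` with `Q = CᵀC`, the finite-horizon Riccati
matrix at time 0 is positive definite for all sufficiently large horizons. -/
theorem riccati_posDef_of_observable {n m p : ℕ}
    (A : Matrix (Fin n) (Fin n) ℝ) (B : Matrix (Fin n) (Fin m) ℝ)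
    (C : Matrix (Fin p) (Fin n) ℝ)
    (Q : Matrix (Fin n) (Fin n) ℝ) (R : Matrix (Fin m) (Fin m) ℝ)
    (hQ : Q = Cᵀ * C) (hR : R.PosDef)
    (hobs : ∀ x : Fin n → ℝ, (∀ j < n, C *ᵥ (A ^ j *ᵥ x) = 0) → x = 0)
    (P : ℕ → ℕ → Matrix (Fin n) (Fin n) ℝ)
    (hPfin : ∀ N, P N (N + 1) = 0)
    (hP : ∀ N, ∀ k ≤ N, P N k = Q + Aᵀ * P N (k + 1) * A -
      Aᵀ * P N (k + 1) * B * (R + Bᵀ * P N (k + 1) * B)⁻¹ *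
        Bᵀ * P N (k + 1) * A) :
    ∃ N0 : ℕ, ∀ N > N0, (P N 0).PosDef := by
  refine ⟨n, fun N hN => ?_⟩
  have key : ∀ d k, k + d = N + 1 → (P N k).PosSemidef ∧
      ∀ x : Fin n → ℝ, x ⬝ᵥ (P N k *ᵥ x) = 0 →
        ∀ j, k + j ≤ N → C *ᵥ (A ^ j *ᵥ x) = 0 := by
    intro d
    induction d with
    | zero =>
      intro k hk
      have hkeq : k = N + 1 := by omega
      subst hkeq
      rw [hPfin]
      exact ⟨Matrix.PosSemidef.zero, fun x _ j hj => by omega⟩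
    | succ d ih =>
      intro k hk
      have hkN : k ≤ N := by omega
      obtain ⟨hpsd, hzero⟩ := ih (k + 1) (by omega)
      set P1 := P N (k + 1) with hP1def
      set K := (R + Bᵀ * P1 * B)⁻¹ * (Bᵀ * (P1 * A)) with hKdef
      have hrec := hP N k hkN
      rw [← hP1def] at hrec
      have hform : P N k = Q + (Kᵀ * (R * K) + (A - B * K)ᵀ * (P1 * (A - B * K))) := by
        rw [hrec, add_sub_assoc, joseph A B P1 R hpsd hR, ← hKdef]
      constructor
      · rw [hform, hQ]
        have q1 : (Cᵀ * C).PosSemidef := by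
          simpa using Matrix.posSemidef_conjTranspose_mul_self C
        have q2 : (Kᵀ * (R * K)).PosSemidef := by
          have := hR.posSemidef.conjTranspose_mul_mul_same K
          simpa [Matrix.mul_assoc] using this
        have q3 : ((A - B * K)ᵀ * (P1 * (A - B * K))).PosSemidef := by
          have := hpsd.conjTranspose_mul_mul_same (A - B * K)
          simpa [Matrix.mul_assoc] using this
        exact q1.add (q2.add q3)
      · intro x hx j hj
        rw [hform] at hx
        have hsplit : x ⬝ᵥ ((Q + (Kᵀ * (R * K) + (A - B * K)ᵀ * (P1 * (A - B * K)))) *ᵥ x)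
            = x ⬝ᵥ (Q *ᵥ x) + (x ⬝ᵥ ((Kᵀ * (R * K)) *ᵥ x)
              + x ⬝ᵥ (((A - B * K)ᵀ * (P1 * (A - B * K))) *ᵥ x)) := by
          simp [add_mulVec, dotProduct_add]
        rw [hsplit] at hx
        have ea : x ⬝ᵥ (Q *ᵥ x) = (C *ᵥ x) ⬝ᵥ (C *ᵥ x) := by rw [hQ, quad_CtC]
        have eb : x ⬝ᵥ ((Kᵀ * (R * K)) *ᵥ x) = (K *ᵥ x) ⬝ᵥ (R *ᵥ (K *ᵥ x)) := quad_conj' K R x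
        have ec : x ⬝ᵥ (((A - B * K)ᵀ * (P1 * (A - B * K))) *ᵥ x)
            = ((A - B * K) *ᵥ x) ⬝ᵥ (P1 *ᵥ ((A - B * K) *ᵥ x)) := quad_conj' (A - B * K) P1 x
        rw [ea, eb, ec] at hx
        have na : (0:ℝ) ≤ (C *ᵥ x) ⬝ᵥ (C *ᵥ x) :=
          Finset.sum_nonneg fun i _ => mul_self_nonneg _
        have nb : (0:ℝ) ≤ (K *ᵥ x) ⬝ᵥ (R *ᵥ (K *ᵥ x)) := psd_quad hR.posSemidef _
        have nc : (0:ℝ) ≤ ((A - B * K) *ᵥ x) ⬝ᵥ (P1 *ᵥ ((A - B * K) *ᵥ x)) := psd_quad hpsd _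
        have ha : (C *ᵥ x) ⬝ᵥ (C *ᵥ x) = 0 := by linarith
        have hb : (K *ᵥ x) ⬝ᵥ (R *ᵥ (K *ᵥ x)) = 0 := by linarith
        have hc : ((A - B * K) *ᵥ x) ⬝ᵥ (P1 *ᵥ ((A - B * K) *ᵥ x)) = 0 := by linarith
        have hC0 : C *ᵥ x = 0 := by rwa [dotProduct_self_eq_zero] at ha
        have hK0 : K *ᵥ x = 0 := by
          by_contra h
          exact (pd_quad hR h).ne' hb
        have hAx : (A - B * K) *ᵥ x = A *ᵥ x := by
          rw [sub_mulVec, ← mulVec_mulVec, hK0, mulVec_zero, sub_zero]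
        cases j with
        | zero => simpa using hC0
        | succ j =>
          have h' := hzero (A *ᵥ x) (by rw [← hAx]; exact hc) j (by omega)
          rw [pow_succ, ← mulVec_mulVec]
          exact h'
  obtain ⟨hpsd, hzero⟩ := key (N + 1) 0 (by omega)
  refine Matrix.posDef_iff_dotProduct_mulVec.mpr ⟨hpsd.1, fun x hx => ?_⟩
  have h0 : (0:ℝ) ≤ x ⬝ᵥ (P N 0 *ᵥ x) := psd_quad hpsd x
  rcases h0.lt_or_eq with h | h
  · simpa using h
  · exact absurd (hobs x fun j hj => hzero x h.symm j (by omega)) hx
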